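/- arXiv:2604.01464 — 6 statements merged into one kernel-verified Lean document; each statement's English description precedes it below -/
import Mathlib

section
/- Let p be a prime and let (a_n)_{n≥0} be a sequence in ℚ_p such that ‖a_n‖_p ≥ p for all n ≥ 1, and let (p_n) be the convergent numerators of the continued fraction with partial quotients (a_n). If a_0 ≠ 0 and ‖a_0‖_p ≥ 1, then ‖p_n‖_p = ‖a_0 a_1 ⋯ a_n‖_p for all n ≥ 0. If a_0 = 0, then ‖p_1‖_p = 1 and ‖p_n‖_p = ‖a_2 a_3 ⋯ a_n‖_p for all n ≥ 2. -/
/-- Lemma 1 (i): norms of convergent numerators of a p-adic continued fraction.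
`P (n+1)` plays the role of `p_n` (with `P 0 = p_{-1} = 1`). -/
theorem padic_cf_numerator_norm (p : ℕ) [Fact p.Prime]
    (a : ℕ → ℚ_[p]) (hnorm : ∀ n, 1 ≤ n → (p : ℝ) ≤ ‖a n‖)
    (P : ℕ → ℚ_[p])
    (hP0 : P 0 = 1) (hP1 : P 1 = a 0)
    (hPrec : ∀ n, P (n + 2) = a (n + 1) * P (n + 1) + P n) :
    (a 0 ≠ 0 → 1 ≤ ‖a 0‖ →
      ∀ n, ‖P (n + 1)‖ = ‖∏ i ∈ Finset.range (n + 1), a i‖) ∧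
    (a 0 = 0 → ‖P 2‖ = 1 ∧
      ∀ n, 2 ≤ n → ‖P (n + 1)‖ = ‖∏ i ∈ Finset.Icc 2 n, a i‖) := by
  have hp1 : (1 : ℝ) < p := by exact_mod_cast (Fact.out : p.Prime).one_lt
  have key : ∀ x y : ℚ_[p], ‖y‖ < ‖x‖ → ‖x + y‖ = ‖x‖ := by
    intro x y h
    rw [Padic.add_eq_max_of_ne (ne_of_gt h)]
    exact max_eq_left h.le
  constructor
  · intro ha0 ha0n
    have hane : ∀ i, ‖a i‖ ≠ 0 := by
      intro i
      rcases Nat.eq_zero_or_pos i with h | h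
      · subst h; simpa using ha0
      · have := hnorm i h
        have : (0:ℝ) < ‖a i‖ := lt_of_lt_of_le (by linarith) this
        exact this.ne'
    have main : ∀ n, ‖P (n + 1)‖ = ‖∏ i ∈ Finset.range (n + 1), a i‖ ∧
        ‖P (n + 2)‖ = ‖∏ i ∈ Finset.range (n + 2), a i‖ := by
      intro n
      induction n with
      | zero =>
        constructor
        · simp [hP1]
        · rw [hPrec 0, hP0, hP1]
          have h1 : ‖a 1 * a 0‖ = ‖a 1‖ * ‖a 0‖ := by simp [norm_mul]
          have hgt : ‖(1 : ℚ_[p])‖ < ‖a 1 * a 0‖ := by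
            rw [h1]
            have := hnorm 1 le_rfl
            simp only [norm_one]
            nlinarith
          rw [key _ _ hgt]
          rw [Finset.prod_range_succ, Finset.prod_range_one, norm_mul, norm_mul]
          ring
      | succ n ih =>
        obtain ⟨ih1, ih2⟩ := ih
        refine ⟨ih2, ?_⟩
        rw [hPrec (n + 1)]
        have hprod2 : ∏ i ∈ Finset.range (n + 2), a i =
            (∏ i ∈ Finset.range (n + 1), a i) * a (n + 1) := Finset.prod_range_succ _ _
        set C := ‖∏ i ∈ Finset.range (n + 1), a i‖ with hC
        have hCpos : 0 < C := by
          rw [hC, norm_prod]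
          exact Finset.prod_pos (fun i _ => lt_of_le_of_ne (norm_nonneg _) (Ne.symm (hane i)))
        have hgt : ‖P (n + 1)‖ < ‖a (n + 2) * P (n + 2)‖ := by
          rw [ih1, norm_mul, ih2, hprod2, norm_mul, ← hC]
          have h1 := hnorm (n + 1) (by omega)
          have h2 := hnorm (n + 2) (by omega)
          have hpp : (p:ℝ) * p ≤ ‖a (n + 2)‖ * ‖a (n + 1)‖ :=
            mul_le_mul h2 h1 (by linarith) (by linarith)
          have h3 : (1:ℝ) < ‖a (n + 2)‖ * ‖a (n + 1)‖ := lt_of_lt_of_le (by nlinarith) hpp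
          calc C = C * 1 := (mul_one C).symm
            _ < C * (‖a (n + 2)‖ * ‖a (n + 1)‖) := mul_lt_mul_of_pos_left h3 hCpos
            _ = ‖a (n + 2)‖ * (C * ‖a (n + 1)‖) := by ring
        have hps : ∏ i ∈ Finset.range (n + 1 + 2), a i =
            (∏ i ∈ Finset.range (n + 2), a i) * a (n + 2) := Finset.prod_range_succ a (n + 2)
        rw [key _ _ hgt, norm_mul, ih2, hps, norm_mul]
        ring
    exact fun n => (main n).1
  · intro ha0
    have hP2 : P 2 = 1 := by rw [hPrec 0, hP1, ha0, hP0]; ring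
    have hP3 : P 3 = a 2 := by rw [hPrec 1, hP2, hP1, ha0]; ring
    refine ⟨by rw [hP2]; simp, ?_⟩
    have hane : ∀ i, 1 ≤ i → (0 : ℝ) < ‖a i‖ := by
      intro i hi
      have := hnorm i hi
      exact lt_of_lt_of_le (by linarith) this
    have main : ∀ n, 2 ≤ n → ‖P (n + 1)‖ = ‖∏ i ∈ Finset.Icc 2 n, a i‖ ∧
        ‖P (n + 2)‖ = ‖∏ i ∈ Finset.Icc 2 (n + 1), a i‖ := by
      intro n hn
      induction n, hn using Nat.le_induction with
      | base =>
        constructor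
        · rw [hP3]; simp
        · rw [hPrec 2, hP3, hP2]
          have hgt : ‖(1 : ℚ_[p])‖ < ‖a 3 * a 2‖ := by
            rw [norm_mul]
            have h2 := hnorm 2 (by omega)
            have h3 := hnorm 3 (by omega)
            simp only [norm_one]
            nlinarith
          rw [key _ _ hgt]
          rw [show Finset.Icc 2 3 = {2, 3} from rfl, Finset.prod_insert (by simp),
            Finset.prod_singleton, norm_mul, norm_mul]
          ring
      | succ n hn ih =>
        obtain ⟨ih1, ih2⟩ := ih
        refine ⟨ih2, ?_⟩
        rw [hPrec (n + 1)]
        have hprod2 : ∏ i ∈ Finset.Icc 2 (n + 1), a i =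
            (∏ i ∈ Finset.Icc 2 n, a i) * a (n + 1) :=
          Finset.prod_Icc_succ_top (by omega) _
        set C := ‖∏ i ∈ Finset.Icc 2 n, a i‖ with hC
        have hCpos : 0 < C := by
          rw [hC, norm_prod]
          exact Finset.prod_pos (fun i hi => hane i (by simp at hi; omega))
        have hgt : ‖P (n + 1)‖ < ‖a (n + 2) * P (n + 2)‖ := by
          rw [ih1, norm_mul, ih2, hprod2, norm_mul, ← hC]
          have h1 := hnorm (n + 1) (by omega)
          have h2 := hnorm (n + 2) (by omega)
          have hpp : (p:ℝ) * p ≤ ‖a (n + 2)‖ * ‖a (n + 1)‖ :=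
            mul_le_mul h2 h1 (by linarith) (by linarith)
          have h3 : (1:ℝ) < ‖a (n + 2)‖ * ‖a (n + 1)‖ := lt_of_lt_of_le (by nlinarith) hpp
          calc C = C * 1 := (mul_one C).symm
            _ < C * (‖a (n + 2)‖ * ‖a (n + 1)‖) := mul_lt_mul_of_pos_left h3 hCpos
            _ = ‖a (n + 2)‖ * (C * ‖a (n + 1)‖) := by ring
        have hps : ∏ i ∈ Finset.Icc 2 (n + 1 + 1), a i =
            (∏ i ∈ Finset.Icc 2 (n + 1), a i) * a (n + 2) :=
          Finset.prod_Icc_succ_top (by omega) a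
        rw [key _ _ hgt, norm_mul, ih2, hps, norm_mul]
        ring
    exact fun n hn => (main n hn).1
end

section
/- Let p be a prime and let (a_n)_{n≥0} be a sequence in ℚ_p such that ‖a_n‖_p ≥ p for all n ≥ 1, and let (q_n) be the convergent denominators of the continued fraction with partial quotients (a_n). Then ‖q_n‖_p = ‖a_1 a_2 ⋯ a_n‖_p for all n ≥ 1 (and ‖q_0‖_p = 1). -/
/-- Lemma 1 (ii): norms of convergent denominators of a p-adic continued fraction.
`Q (n+1)` plays the role of `q_n` (with `Q 0 = q_{-1} = 0`). -/
theorem padic_cf_denominator_norm (p : ℕ) [Fact p.Prime]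
    (a : ℕ → ℚ_[p]) (hnorm : ∀ n, 1 ≤ n → (p : ℝ) ≤ ‖a n‖)
    (Q : ℕ → ℚ_[p])
    (hQ0 : Q 0 = 0) (hQ1 : Q 1 = 1)
    (hQrec : ∀ n, Q (n + 2) = a (n + 1) * Q (n + 1) + Q n) :
    ‖Q 1‖ = 1 ∧ ∀ n, 1 ≤ n → ‖Q (n + 1)‖ = ‖∏ i ∈ Finset.Icc 1 n, a i‖ := by
  have hp1 : (1 : ℝ) < p := by exact_mod_cast (Fact.out : p.Prime).one_lt
  have key : ∀ n, 1 ≤ n →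
      ‖Q (n + 1)‖ = ‖∏ i ∈ Finset.Icc 1 n, a i‖ ∧ ‖Q n‖ < ‖Q (n + 1)‖ := by
    intro n hn
    induction n with
    | zero => omega
    | succ m ih =>
      rcases Nat.eq_or_lt_of_le hn with h | h
      · -- m + 1 = 1, i.e. m = 0
        have hm : m = 0 := by omega
        subst hm
        have h2 : Q 2 = a 1 := by
          have := hQrec 0
          rw [hQ0, hQ1] at this
          simpa using this
        constructor
        · rw [h2]; simp
        · rw [h2, hQ1, norm_one]
          exact lt_of_lt_of_le hp1 (hnorm 1 le_rfl)
      · have hm : 1 ≤ m := by omega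
        obtain ⟨ihe, ihlt⟩ := ih hm
        have hQpos : 0 < ‖Q (m + 1)‖ := lt_of_le_of_lt (norm_nonneg _) ihlt
        have halt : (1 : ℝ) < ‖a (m + 1)‖ := lt_of_lt_of_le hp1 (hnorm (m + 1) (by omega))
        have hbig : ‖Q (m + 1)‖ < ‖a (m + 1) * Q (m + 1)‖ := by
          rw [norm_mul]
          nlinarith
        have hne : ‖a (m + 1) * Q (m + 1)‖ ≠ ‖Q m‖ :=
          (lt_trans ihlt hbig).ne'
        have hsum : ‖Q (m + 2)‖ = ‖a (m + 1) * Q (m + 1)‖ := by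
          rw [hQrec m, Padic.add_eq_max_of_ne hne,
            max_eq_left (le_of_lt (lt_trans ihlt hbig))]
        constructor
        · rw [hsum, norm_mul, ihe, ← norm_mul,
            Finset.prod_Icc_succ_top (by omega : 1 ≤ m + 1), mul_comm]
        · rw [hsum]; exact hbig
  exact ⟨by rw [hQ1, norm_one], fun n hn => (key n hn).1⟩
end

section
/- Let p be a prime and let (a_n)_{n≥0} be a sequence in ℚ_p with ‖a_n‖_p ≥ p for all n ≥ 1. Let ξ ∈ ℚ_p and let (ξ_k)_{k≥0} be a sequence in ℚ_p with ξ_0 = ξ, ξ_{k+1} ≠ 0 and ξ_k = a_k + 1/ξ_{k+1} for all k ≥ 0, and ‖ξ_k‖_p = ‖a_k‖_p for all k ≥ 1. Then for every n ≥ 0, ‖ξ − p_n/q_n‖_p = 1/(‖q_n‖_p · ‖q_{n+1}‖_p), where (p_n), (q_n) are the convergent numerators and denominators of the continued fraction with partial quotients (a_n). -/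
/-- Lemma 1 (iv), first part: `‖ξ - p_n/q_n‖_p = 1/(‖q_n‖_p ‖q_{n+1}‖_p)`.
Here `P (n+1)` is `p_n` and `Q (n+1)` is `q_n` (so `P 0 = p_{-1}`, `Q 0 = q_{-1}`). -/
theorem padic_cf_approximation (p : ℕ) [Fact p.Prime]
    (a : ℕ → ℚ_[p]) (hnorm : ∀ n, 1 ≤ n → (p : ℝ) ≤ ‖a n‖)
    (P Q : ℕ → ℚ_[p])
    (hP0 : P 0 = 1) (hP1 : P 1 = a 0) (hQ0 : Q 0 = 0) (hQ1 : Q 1 = 1)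
    (hPrec : ∀ n, P (n + 2) = a (n + 1) * P (n + 1) + P n)
    (hQrec : ∀ n, Q (n + 2) = a (n + 1) * Q (n + 1) + Q n)
    (ξ : ℚ_[p]) (ξs : ℕ → ℚ_[p])
    (hξ0 : ξs 0 = ξ)
    (hne : ∀ k, ξs (k + 1) ≠ 0)
    (hrec : ∀ k, ξs k = a k + 1 / ξs (k + 1))
    (hξnorm : ∀ k, 1 ≤ k → ‖ξs k‖ = ‖a k‖) :
    ∀ n, ‖ξ - P (n + 1) / Q (n + 1)‖ = 1 / (‖Q (n + 1)‖ * ‖Q (n + 2)‖) := by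
  have hp1 : (1 : ℝ) < p := by exact_mod_cast (Fact.out : p.Prime).one_lt
  -- determinant identity
  have hdet : ∀ n, P n * Q (n + 1) - P (n + 1) * Q n = (-1) ^ n := by
    intro n
    induction n with
    | zero => simp [hP0, hP1, hQ0, hQ1]
    | succ m ih =>
      rw [hPrec m, hQrec m]
      linear_combination -ih
  -- norms of Q grow
  have hQ : ∀ n, 1 ≤ ‖Q (n + 1)‖ ∧ ‖Q n‖ < ‖Q (n + 1)‖ := by
    intro n
    induction n with
    | zero => simp [hQ0, hQ1]
    | succ m ih =>
      have ha : (p : ℝ) ≤ ‖a (m + 1)‖ := hnorm _ (by omega)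
      have h1 : ‖Q (m + 1)‖ < ‖a (m + 1) * Q (m + 1)‖ := by
        rw [norm_mul]
        nlinarith [ih.1, ih.2]
      have h2 : ‖Q m‖ < ‖a (m + 1) * Q (m + 1)‖ := lt_trans ih.2 h1
      have h3 : ‖Q (m + 2)‖ = ‖a (m + 1) * Q (m + 1)‖ := by
        rw [hQrec m, add_comm, Padic.add_eq_max_of_ne h2.ne, max_eq_right h2.le]
      refine ⟨?_, by rw [h3]; exact h1⟩
      rw [h3]; exact le_of_lt (lt_of_le_of_lt ih.1 h1)
  have hξs : ∀ k, (p : ℝ) ≤ ‖ξs (k + 1)‖ := fun k => by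
    rw [hξnorm (k + 1) (by omega)]; exact hnorm (k + 1) (by omega)
  -- the key norm of the "denominator"
  have hD : ∀ n, ‖ξs (n + 1) * Q (n + 1) + Q n‖ = ‖Q (n + 2)‖ := by
    intro n
    have hx2 := hξs (n + 1)
    have hx2ne : ξs (n + 2) ≠ 0 := hne (n + 1)
    have key : ξs (n + 1) * Q (n + 1) + Q n = Q (n + 2) + Q (n + 1) * (ξs (n + 2))⁻¹ := by
      rw [hrec (n + 1), hQrec n]
      field_simp
      ring
    have hsmall : ‖Q (n + 1) * (ξs (n + 2))⁻¹‖ < ‖Q (n + 2)‖ := by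
      rw [norm_mul, norm_inv]
      have h1 : ‖ξs (n + 2)‖⁻¹ < 1 := by
        rw [inv_lt_one_iff₀]; right; linarith
      have h2 : (0 : ℝ) < ‖Q (n + 1)‖ := lt_of_lt_of_le one_pos (hQ n).1
      have : ‖Q (n + 1)‖ * ‖ξs (n + 2)‖⁻¹ < ‖Q (n + 1)‖ * 1 := by
        apply mul_lt_mul_of_pos_left h1 h2
      rw [mul_one] at this
      exact lt_trans this (hQ (n + 1)).2
    rw [key, add_comm, Padic.add_eq_max_of_ne hsmall.ne, max_eq_right hsmall.le]
  -- main identity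
  have hmain : ∀ n, ξ * (ξs (n + 1) * Q (n + 1) + Q n) = ξs (n + 1) * P (n + 1) + P n := by
    intro n
    induction n with
    | zero =>
      have hx0 : ξ * ξs 1 = a 0 * ξs 1 + 1 := by
        have h := hrec 0
        rw [hξ0] at h
        rw [h]
        field_simp [hne 0]
      rw [hQ1, hQ0, hP1, hP0]
      linear_combination hx0
    | succ m ih =>
      have hx : ξs (m + 1) * ξs (m + 2) = a (m + 1) * ξs (m + 2) + 1 := by
        rw [hrec (m + 1)]
        field_simp [hne (m + 1)]
      rw [hQrec m, hPrec m]
      linear_combination ξs (m + 2) * ih - (ξ * Q (m + 1) - P (m + 1)) * hx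
  intro n
  have hDne : ξs (n + 1) * Q (n + 1) + Q n ≠ 0 := by
    intro h
    have h1 := hD n
    rw [h, norm_zero] at h1
    have h2 := (hQ (n + 1)).1
    linarith
  have hQne : Q (n + 1) ≠ 0 := by
    intro h
    have := (hQ n).1
    rw [h, norm_zero] at this
    linarith
  have heq : ξ - P (n + 1) / Q (n + 1)
      = ((-1) ^ n) / ((ξs (n + 1) * Q (n + 1) + Q n) * Q (n + 1)) := by
    rw [← hdet n]
    have hDne' : Q (n + 1) * ξs (n + 1) + Q n ≠ 0 := by rw [mul_comm]; exact hDne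
    field_simp
    linear_combination Q (n + 1) * hmain n
  rw [heq, norm_div, norm_mul, hD n]
  have h1 : ‖((-1 : ℚ_[p]) ^ n)‖ = 1 := by
    rw [norm_pow, norm_neg, norm_one, one_pow]
  rw [h1, mul_comm]
end

section
/- Let p be a prime and let (a_n)_{n≥0} be a sequence in ℚ_p with ‖a_n‖_p ≥ p for all n ≥ 1. Let ξ ∈ ℚ_p and let (ξ_k)_{k≥0} be a sequence in ℚ_p with ξ_0 = ξ, ξ_{k+1} ≠ 0 and ξ_k = a_k + 1/ξ_{k+1} for all k ≥ 0, and ‖ξ_k‖_p = ‖a_k‖_p for all k ≥ 1. Then the sequence of convergents p_n/q_n converges to ξ in ℚ_p: lim_{n→∞} p_n/q_n = ξ. -/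
/-- Lemma 1 (iv), second part: the convergents `p_n/q_n` tend to `ξ` in `ℚ_p`.
Here `P (n+1)` is `p_n` and `Q (n+1)` is `q_n` (so `P 0 = p_{-1}`, `Q 0 = q_{-1}`). -/
theorem padic_cf_convergence (p : ℕ) [Fact p.Prime]
    (a : ℕ → ℚ_[p]) (hnorm : ∀ n, 1 ≤ n → (p : ℝ) ≤ ‖a n‖)
    (P Q : ℕ → ℚ_[p])
    (hP0 : P 0 = 1) (hP1 : P 1 = a 0) (hQ0 : Q 0 = 0) (hQ1 : Q 1 = 1)
    (hPrec : ∀ n, P (n + 2) = a (n + 1) * P (n + 1) + P n)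
    (hQrec : ∀ n, Q (n + 2) = a (n + 1) * Q (n + 1) + Q n)
    (ξ : ℚ_[p]) (ξs : ℕ → ℚ_[p])
    (hξ0 : ξs 0 = ξ)
    (hne : ∀ k, ξs (k + 1) ≠ 0)
    (hrec : ∀ k, ξs k = a k + 1 / ξs (k + 1))
    (hξnorm : ∀ k, 1 ≤ k → ‖ξs k‖ = ‖a k‖) :
    Filter.Tendsto (fun n => P (n + 1) / Q (n + 1)) Filter.atTop (nhds ξ) := by
  have hp : (1:ℝ) < p := by exact_mod_cast (Fact.out : p.Prime).one_lt
  have hp0 : (0:ℝ) < p := lt_trans one_pos hp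
  -- determinant identity
  have hdet : ∀ n, P (n+1) * Q n - P n * Q (n+1) = (-1)^(n+1) := by
    intro n
    induction n with
    | zero => simp [hP0, hP1, hQ0, hQ1]
    | succ n ih =>
      rw [hPrec, hQrec, pow_succ]
      linear_combination (-1 : ℚ_[p]) * ih
  -- Q norms
  have hQ : ∀ n, (p:ℝ)^n ≤ ‖Q (n+1)‖ ∧ ‖Q n‖ ≤ ‖Q (n+1)‖ := by
    intro n
    induction n with
    | zero => simp [hQ0, hQ1]
    | succ n ih =>
      obtain ⟨h1, h2⟩ := ih
      have hpow : (1:ℝ) ≤ (p:ℝ)^n := one_le_pow₀ hp.le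
      have hQpos : (0:ℝ) < ‖Q (n+1)‖ := lt_of_lt_of_le (lt_of_lt_of_le one_pos hpow) h1
      have ha : (p:ℝ) ≤ ‖a (n+1)‖ := hnorm (n+1) (by omega)
      have hmul : ‖a (n+1) * Q (n+1)‖ = ‖a (n+1)‖ * ‖Q (n+1)‖ := norm_mul _ _
      have hgt : ‖Q n‖ < ‖a (n+1) * Q (n+1)‖ := by
        rw [hmul]
        calc ‖Q n‖ ≤ ‖Q (n+1)‖ := h2
          _ = 1 * ‖Q (n+1)‖ := (one_mul _).symm
          _ < ‖a (n+1)‖ * ‖Q (n+1)‖ :=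
              mul_lt_mul_of_pos_right (lt_of_lt_of_le hp ha) hQpos
      have hEq : ‖Q (n+2)‖ = ‖a (n+1) * Q (n+1)‖ := by
        rw [hQrec, Padic.add_eq_max_of_ne (ne_of_gt hgt)]
        exact max_eq_left hgt.le
      constructor
      · rw [hEq, hmul, pow_succ, mul_comm ((p:ℝ)^n) (p:ℝ)]
        exact mul_le_mul ha h1 (by positivity) (le_trans hp0.le ha)
      · rw [hEq, hmul]
        exact le_mul_of_one_le_left (norm_nonneg _) (le_trans hp.le ha)
  -- ξ in terms of convergents
  have hxi : ∀ n, ξ * (Q (n+1) * ξs (n+1) + Q n) = P (n+1) * ξs (n+1) + P n := by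
    intro n
    induction n with
    | zero =>
      have h := hrec 0
      rw [hξ0] at h
      rw [hP0, hP1, hQ0, hQ1, h]
      field_simp [hne 0]
      ring
    | succ n ih =>
      have h := hrec (n+1)
      have hz := hne (n+1)
      have h' : ξs (n+1) * ξs (n+2) = a (n+1) * ξs (n+2) + 1 := by
        rw [h]; field_simp
      rw [hPrec, hQrec]
      linear_combination ξs (n+2) * ih - (ξ * Q (n+1) - P (n+1)) * h'
  -- key bound
  have key : ∀ n, ‖P (n+1) / Q (n+1) - ξ‖ ≤ ((p:ℝ)⁻¹)^n := by
    intro n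
    obtain ⟨h1, h2⟩ := hQ n
    have hpow : (1:ℝ) ≤ (p:ℝ)^n := one_le_pow₀ hp.le
    have hQpos : (0:ℝ) < ‖Q (n+1)‖ := lt_of_lt_of_le (lt_of_lt_of_le one_pos hpow) h1
    have hQne : Q (n+1) ≠ 0 := by
      intro h; rw [h, norm_zero] at hQpos; exact lt_irrefl _ hQpos
    have ha : (p:ℝ) ≤ ‖ξs (n+1)‖ := by
      rw [hξnorm (n+1) (by omega)]; exact hnorm (n+1) (by omega)
    have hmul : ‖Q (n+1) * ξs (n+1)‖ = ‖Q (n+1)‖ * ‖ξs (n+1)‖ := norm_mul _ _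
    have hgt : ‖Q n‖ < ‖Q (n+1) * ξs (n+1)‖ := by
      rw [hmul]
      calc ‖Q n‖ ≤ ‖Q (n+1)‖ := h2
        _ = ‖Q (n+1)‖ * 1 := (mul_one _).symm
        _ < ‖Q (n+1)‖ * ‖ξs (n+1)‖ :=
            mul_lt_mul_of_pos_left (lt_of_lt_of_le hp ha) hQpos
    have hden : ‖Q (n+1) * ξs (n+1) + Q n‖ = ‖Q (n+1)‖ * ‖ξs (n+1)‖ := by
      rw [Padic.add_eq_max_of_ne (ne_of_gt hgt), max_eq_left hgt.le, hmul]
    have hdenpos : (0:ℝ) < ‖Q (n+1) * ξs (n+1) + Q n‖ := by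
      rw [hden]; exact mul_pos hQpos (lt_of_lt_of_le hp0 ha)
    have hdenne : Q (n+1) * ξs (n+1) + Q n ≠ 0 := by
      intro h; rw [h, norm_zero] at hdenpos; exact lt_irrefl _ hdenpos
    have hmulid : (P (n+1) / Q (n+1) - ξ) * (Q (n+1) * (Q (n+1) * ξs (n+1) + Q n))
        = (-1)^(n+1) := by
      have hc : P (n+1) / Q (n+1) * (Q (n+1) * (Q (n+1) * ξs (n+1) + Q n))
          = P (n+1) * (Q (n+1) * ξs (n+1) + Q n) := by
        field_simp
      rw [sub_mul, hc]
      linear_combination hdet n - Q (n+1) * hxi n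
    have hdiff : P (n+1) / Q (n+1) - ξ
        = (-1)^(n+1) / (Q (n+1) * (Q (n+1) * ξs (n+1) + Q n)) :=
      (eq_div_iff (mul_ne_zero hQne hdenne)).mpr hmulid
    rw [hdiff, norm_div, norm_pow, norm_neg, norm_one, one_pow, norm_mul, hden]
    have hge : (p:ℝ)^n ≤ ‖Q (n+1)‖ * (‖Q (n+1)‖ * ‖ξs (n+1)‖) := by
      calc (p:ℝ)^n ≤ ‖Q (n+1)‖ := h1
        _ = ‖Q (n+1)‖ * 1 := (mul_one _).symm
        _ ≤ ‖Q (n+1)‖ * (‖Q (n+1)‖ * ‖ξs (n+1)‖) := by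
            apply mul_le_mul_of_nonneg_left _ hQpos.le
            calc (1:ℝ) ≤ ‖Q (n+1)‖ := le_trans hpow h1
              _ = ‖Q (n+1)‖ * 1 := (mul_one _).symm
              _ ≤ ‖Q (n+1)‖ * ‖ξs (n+1)‖ :=
                  mul_le_mul_of_nonneg_left (le_trans hp.le ha) hQpos.le
    calc 1 / (‖Q (n+1)‖ * (‖Q (n+1)‖ * ‖ξs (n+1)‖)) ≤ 1 / (p:ℝ)^n :=
          one_div_le_one_div_of_le (by positivity) hge
      _ = ((p:ℝ)⁻¹)^n := by rw [one_div, inv_pow]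
  have hlim : Filter.Tendsto (fun n => P (n+1) / Q (n+1) - ξ) Filter.atTop (nhds 0) :=
    squeeze_zero_norm key
      (tendsto_pow_atTop_nhds_zero_of_lt_one (by positivity) (inv_lt_one_of_one_lt₀ hp))
  have := hlim.add_const ξ
  simpa using this
end

section
/- Let p be a prime and let ξ ∈ ℚ_p be irrational (ξ ∉ ℚ). Then there exists a sequence (a_n)_{n≥0} of rational numbers whose denominators are powers of p (a_n ∈ ℤ[1/p]) such that 0 ≤ a_0 < p, 0 < a_n < p and ‖a_n‖_p ≥ p for all n ≥ 1, and such that the convergents p_n/q_n of the continued fraction with partial quotients (a_n) converge to ξ in ℚ_p. -/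
open Filter

variable {p : ℕ} [Fact p.Prime]

lemma padicCF.frac_approx (ξ : ℚ_[p]) :
    ∃ a : ℚ, (∃ m : ℕ, ∃ z : ℤ, (p : ℚ) ^ m * a = (z : ℚ)) ∧ 0 ≤ a ∧ a < p ∧
      ‖ξ - (a : ℚ_[p])‖ ≤ (p : ℝ)⁻¹ := by
  have hp1 : 1 < (p : ℝ) := by exact_mod_cast (Fact.out : p.Prime).one_lt
  have hp0 : (0:ℝ) < p := by linarith
  have hpQ : (0:ℚ) < p := by exact_mod_cast (Fact.out : p.Prime).pos
  obtain ⟨m, hm⟩ : ∃ m : ℕ, ‖ξ‖ ≤ (p : ℝ) ^ m := by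
    obtain ⟨m, hm⟩ := pow_unbounded_of_one_lt ‖ξ‖ hp1
    exact ⟨m, hm.le⟩
  have hnormp : ‖((p : ℚ_[p]) ^ m)‖ = ((p:ℝ) ^ m)⁻¹ := by
    rw [norm_pow, Padic.norm_p, inv_pow]
  have hmem : ‖(p : ℚ_[p]) ^ m * ξ‖ ≤ 1 := by
    rw [norm_mul, hnormp]
    rw [inv_mul_le_iff₀ (by positivity), mul_one]
    exact hm
  set y : ℤ_[p] := ⟨(p : ℚ_[p]) ^ m * ξ, hmem⟩ with hy
  set z : ℕ := y.appr (m + 1) with hz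
  obtain ⟨c, hc⟩ : ((p : ℤ_[p]) ^ (m+1)) ∣ (y - (z : ℤ_[p])) :=
    Ideal.mem_span_singleton.mp (PadicInt.appr_spec (m+1) y)
  refine ⟨(z : ℚ) / (p : ℚ) ^ m, ⟨m, z, by field_simp; norm_cast⟩, by positivity, ?_, ?_⟩
  · rw [div_lt_iff₀ (by positivity)]
    have := PadicInt.appr_lt y (m + 1)
    rw [← hz] at this
    calc (z : ℚ) < (p : ℚ) ^ (m+1) := by exact_mod_cast this
    _ = (p:ℚ) * (p:ℚ)^m := by ring
  · have hyval : ((y : ℚ_[p])) = (p : ℚ_[p]) ^ m * ξ := rfl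
    have hcast : (((z : ℚ) / (p : ℚ) ^ m : ℚ) : ℚ_[p]) = (z : ℚ_[p]) / (p : ℚ_[p]) ^ m := by
      push_cast; ring
    have hpne : ((p : ℚ_[p]) ^ m) ≠ 0 := by
      apply pow_ne_zero
      exact_mod_cast (Nat.cast_ne_zero (R := ℚ_[p])).mpr (Fact.out : p.Prime).ne_zero
    have hdiff : ξ - (((z : ℚ) / (p : ℚ) ^ m : ℚ) : ℚ_[p]) =
        ((y : ℚ_[p]) - (z : ℚ_[p])) / (p : ℚ_[p]) ^ m := by
      rw [hcast, hyval]; field_simp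
    rw [hdiff, norm_div, hnormp]
    have hnum : ‖(y : ℚ_[p]) - (z : ℚ_[p])‖ ≤ ((p:ℝ) ^ (m+1))⁻¹ := by
      have : ((y - (z : ℤ_[p]) : ℤ_[p]) : ℚ_[p]) = (y : ℚ_[p]) - (z : ℚ_[p]) := by push_cast; ring
      rw [← this, hc]
      push_cast
      rw [norm_mul, norm_pow, Padic.norm_p, inv_pow]
      calc ((p:ℝ)^(m+1))⁻¹ * ‖((c : ℤ_[p]) : ℚ_[p])‖ ≤ ((p:ℝ)^(m+1))⁻¹ * 1 := by
            exact mul_le_mul_of_nonneg_left (PadicInt.norm_le_one c) (by positivity)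
      _ = ((p:ℝ)^(m+1))⁻¹ := mul_one _
    rw [div_inv_eq_mul]
    calc ‖(y : ℚ_[p]) - (z : ℚ_[p])‖ * (p:ℝ)^m ≤ ((p:ℝ) ^ (m+1))⁻¹ * (p:ℝ)^m := by
          exact mul_le_mul_of_nonneg_right hnum (by positivity)
    _ = (p:ℝ)⁻¹ := by rw [pow_succ]; field_simp

noncomputable def padicCF.fr (ξ : ℚ_[p]) : ℚ := (padicCF.frac_approx ξ).choose

lemma padicCF.fr_spec (ξ : ℚ_[p]) :
    (∃ m : ℕ, ∃ z : ℤ, (p : ℚ) ^ m * padicCF.fr ξ = ((z : ℤ) : ℚ)) ∧ 0 ≤ padicCF.fr ξ ∧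
      padicCF.fr ξ < p ∧ ‖ξ - ((padicCF.fr ξ : ℚ) : ℚ_[p])‖ ≤ (p : ℝ)⁻¹ :=
  (padicCF.frac_approx ξ).choose_spec

noncomputable def padicCF.X (ξ : ℚ_[p]) : ℕ → ℚ_[p]
  | 0 => ξ
  | n + 1 => (padicCF.X ξ n - ((padicCF.fr (padicCF.X ξ n) : ℚ) : ℚ_[p]))⁻¹

theorem padic_cf_expansion_exists' (p : ℕ) [Fact p.Prime] (ξ : ℚ_[p])
    (hirr : ∀ r : ℚ, (r : ℚ_[p]) ≠ ξ) :
    ∃ a : ℕ → ℚ,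
      (∀ n, ∃ m : ℕ, ∃ z : ℤ, (p : ℚ) ^ m * a n = z) ∧
      (0 ≤ a 0 ∧ a 0 < p) ∧
      (∀ n, 1 ≤ n → 0 < a n ∧ a n < p ∧ (p : ℝ) ≤ ‖((a n : ℚ) : ℚ_[p])‖) ∧
      ∀ P Q : ℕ → ℚ_[p],
        P 0 = 1 → P 1 = ((a 0 : ℚ) : ℚ_[p]) → Q 0 = 0 → Q 1 = 1 →
        (∀ n, P (n + 2) = ((a (n + 1) : ℚ) : ℚ_[p]) * P (n + 1) + P n) →
        (∀ n, Q (n + 2) = ((a (n + 1) : ℚ) : ℚ_[p]) * Q (n + 1) + Q n) →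
        Filter.Tendsto (fun n => P (n + 1) / Q (n + 1)) Filter.atTop (nhds ξ) := by
  have hp1 : 1 < (p : ℝ) := by exact_mod_cast (Fact.out : p.Prime).one_lt
  have hp0 : (0:ℝ) < p := by linarith
  set X : ℕ → ℚ_[p] := padicCF.X ξ with hX
  set a : ℕ → ℚ := fun n => padicCF.fr (X n) with ha
  have hXsucc : ∀ n, X (n+1) = (X n - ((a n : ℚ) : ℚ_[p]))⁻¹ := fun n => rfl
  -- irrationality of all complete quotients
  have irr : ∀ n, ∀ r : ℚ, (r : ℚ_[p]) ≠ X n := by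
    intro n
    induction n with
    | zero => exact hirr
    | succ n ih =>
      intro r hr
      rw [hXsucc n] at hr
      have hne : X n - ((a n : ℚ) : ℚ_[p]) ≠ 0 := by
        intro h0
        exact ih (a n) (sub_eq_zero.mp h0).symm
      have hr0 : (r : ℚ_[p]) ≠ 0 := hr ▸ inv_ne_zero hne
      have : ((a n + r⁻¹ : ℚ) : ℚ_[p]) = X n := by
        push_cast
        rw [hr]
        field_simp
        ring
      exact ih _ this
  have hne : ∀ n, X n - ((a n : ℚ) : ℚ_[p]) ≠ 0 := by
    intro n h0
    exact irr n (a n) (sub_eq_zero.mp h0).symm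
  have hfr : ∀ n, ‖X n - ((a n : ℚ) : ℚ_[p])‖ ≤ (p:ℝ)⁻¹ := fun n => (padicCF.fr_spec (X n)).2.2.2
  have hXnorm : ∀ n, (p:ℝ) ≤ ‖X (n+1)‖ := by
    intro n
    rw [hXsucc n, norm_inv]
    rw [le_inv_comm₀ hp0 (norm_pos_iff.mpr (hne n))]
    exact hfr n
  have hanorm : ∀ n, (p:ℝ) ≤ ‖((a (n+1) : ℚ) : ℚ_[p])‖ := by
    intro n
    have h1 : ‖X (n+1) - ((a (n+1) : ℚ) : ℚ_[p])‖ < ‖X (n+1)‖ := by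
      calc ‖X (n+1) - ((a (n+1) : ℚ) : ℚ_[p])‖ ≤ (p:ℝ)⁻¹ := hfr (n+1)
      _ < p := by
            calc (p:ℝ)⁻¹ < 1 := by rw [inv_lt_one_iff₀]; right; exact hp1
            _ < p := hp1
      _ ≤ ‖X (n+1)‖ := hXnorm n
    have : ‖((a (n+1) : ℚ) : ℚ_[p])‖ = ‖X (n+1)‖ := by
      have heq : ((a (n+1) : ℚ) : ℚ_[p]) = X (n+1) + -(X (n+1) - ((a (n+1) : ℚ) : ℚ_[p])) := by ring
      rw [heq, Padic.add_eq_max_of_ne (by rw [norm_neg]; exact h1.ne')]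
      rw [norm_neg]
      exact max_eq_left h1.le
    rw [this]; exact hXnorm n
  refine ⟨a, fun n => (padicCF.fr_spec (X n)).1, ⟨(padicCF.fr_spec (X 0)).2.1, (padicCF.fr_spec (X 0)).2.2.1⟩, ?_, ?_⟩
  · intro n hn
    obtain ⟨k, rfl⟩ : ∃ k, n = k + 1 := ⟨n - 1, by omega⟩
    refine ⟨?_, (padicCF.fr_spec (X (k+1))).2.2.1, hanorm k⟩
    have h0 : a (k+1) ≠ 0 := by
      intro h0
      have := hanorm k
      rw [h0] at this
      simp at this
      exact (Fact.out : p.Prime).ne_zero this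
    exact lt_of_le_of_ne (padicCF.fr_spec (X (k+1))).2.1 (Ne.symm h0)
  · intro P Q hP0 hP1 hQ0 hQ1 hPrec hQrec
    -- key identity
    have key : ∀ n, (ξ * Q (n+1) - P (n+1)) * X (n+1) = P n - ξ * Q n := by
      intro n
      induction n with
      | zero =>
        rw [hP0, hP1, hQ0, hQ1, hXsucc 0]
        simp only [mul_one, mul_zero, sub_zero]
        exact mul_inv_cancel₀ (hne 0)
      | succ n ih =>
        have hx : X (n+2) * (X (n+1) - ((a (n+1) : ℚ) : ℚ_[p])) = 1 := by
          rw [hXsucc (n+1)]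
          exact inv_mul_cancel₀ (hne (n+1))
        rw [hPrec n, hQrec n]
        linear_combination X (n+2) * ih - (ξ * Q (n+1) - P (n+1)) * hx
    have enorm : ∀ n, ‖ξ * Q n - P n‖ ≤ (p:ℝ)⁻¹ ^ n := by
      intro n
      induction n with
      | zero => simp [hP0, hQ0]
      | succ n ih =>
        have hXn := hXnorm n
        have hXne : X (n+1) ≠ 0 := by
          intro h; rw [h] at hXn; simp at hXn
          exact (Fact.out : p.Prime).ne_zero hXn
        have h1 : ‖ξ * Q (n+1) - P (n+1)‖ * (p:ℝ) ≤ ‖ξ * Q (n+1) - P (n+1)‖ * ‖X (n+1)‖ :=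
          mul_le_mul_of_nonneg_left hXn (norm_nonneg _)
        have h2 : ‖ξ * Q (n+1) - P (n+1)‖ * ‖X (n+1)‖ = ‖P n - ξ * Q n‖ := by
          rw [← norm_mul, key n]
        have h3 : ‖P n - ξ * Q n‖ ≤ (p:ℝ)⁻¹ ^ n := by
          rw [← norm_neg]; simpa using ih
        have : ‖ξ * Q (n+1) - P (n+1)‖ * (p:ℝ) ≤ (p:ℝ)⁻¹ ^ n := by
          calc ‖ξ * Q (n+1) - P (n+1)‖ * (p:ℝ) ≤ ‖P n - ξ * Q n‖ := h1.trans_eq h2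
          _ ≤ (p:ℝ)⁻¹ ^ n := h3
        rw [pow_succ]
        calc ‖ξ * Q (n+1) - P (n+1)‖ = ‖ξ * Q (n+1) - P (n+1)‖ * (p:ℝ) * (p:ℝ)⁻¹ := by
              field_simp
        _ ≤ (p:ℝ)⁻¹ ^ n * (p:ℝ)⁻¹ := by
              exact mul_le_mul_of_nonneg_right this (by positivity)
    have qnorm : ∀ n, 1 ≤ ‖Q (n+1)‖ ∧ ‖Q n‖ < ‖Q (n+1)‖ := by
      intro n
      induction n with
      | zero => rw [hQ0, hQ1]; simp
      | succ n ih =>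
        have ha1 := hanorm n
        have h1 : ‖((a (n+1) : ℚ) : ℚ_[p]) * Q (n+1)‖ = ‖((a (n+1) : ℚ) : ℚ_[p])‖ * ‖Q (n+1)‖ :=
          norm_mul _ _
        have h2 : (p:ℝ) ≤ ‖((a (n+1) : ℚ) : ℚ_[p])‖ * ‖Q (n+1)‖ := by
          calc (p:ℝ) = p * 1 := (mul_one _).symm
          _ ≤ ‖((a (n+1) : ℚ) : ℚ_[p])‖ * ‖Q (n+1)‖ :=
              mul_le_mul ha1 ih.1 zero_le_one (le_trans hp0.le ha1)
        have h3 : ‖Q (n+1)‖ < ‖((a (n+1) : ℚ) : ℚ_[p])‖ * ‖Q (n+1)‖ := by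
          calc ‖Q (n+1)‖ = 1 * ‖Q (n+1)‖ := (one_mul _).symm
          _ < ‖((a (n+1) : ℚ) : ℚ_[p])‖ * ‖Q (n+1)‖ := by
              apply mul_lt_mul_of_pos_right _ (lt_of_lt_of_le zero_lt_one ih.1)
              linarith
        have h4 : ‖Q n‖ < ‖((a (n+1) : ℚ) : ℚ_[p]) * Q (n+1)‖ := by
          rw [h1]; exact lt_trans ih.2 h3
        have h5 : ‖Q (n+2)‖ = ‖((a (n+1) : ℚ) : ℚ_[p]) * Q (n+1)‖ := by
          rw [hQrec n, Padic.add_eq_max_of_ne (ne_of_gt h4)]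
          exact max_eq_left h4.le
        constructor
        · rw [h5, h1]; linarith
        · rw [h5, h1]; exact h3
    have bound : ∀ n, ‖P (n+1) / Q (n+1) - ξ‖ ≤ (p:ℝ)⁻¹ ^ (n+1) := by
      intro n
      have hQne : Q (n+1) ≠ 0 := by
        intro h
        have := (qnorm n).1
        rw [h] at this; simp at this; linarith
      have : P (n+1) / Q (n+1) - ξ = -(ξ * Q (n+1) - P (n+1)) / Q (n+1) := by
        field_simp
        ring
      rw [this, norm_div, norm_neg]
      calc ‖ξ * Q (n+1) - P (n+1)‖ / ‖Q (n+1)‖ ≤ ‖ξ * Q (n+1) - P (n+1)‖ / 1 := by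
            apply div_le_div_of_nonneg_left (norm_nonneg _) zero_lt_one (qnorm n).1
      _ = ‖ξ * Q (n+1) - P (n+1)‖ := div_one _
      _ ≤ (p:ℝ)⁻¹ ^ (n+1) := enorm (n+1)
    rw [tendsto_iff_norm_sub_tendsto_zero]
    apply squeeze_zero (fun n => norm_nonneg _) bound
    have h01 : (p:ℝ)⁻¹ < 1 := by rw [inv_lt_one_iff₀]; right; exact hp1
    have := tendsto_pow_atTop_nhds_zero_of_lt_one (by positivity) h01
    exact this.comp (tendsto_add_atTop_nat 1)

/-- Every irrational `ξ ∈ ℚ_p` admits a p-adic continued fraction expansion with partial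
quotients `a_n ∈ ℤ[1/p]`, `0 ≤ a_0 < p`, `0 < a_n < p` and `‖a_n‖_p ≥ p` for `n ≥ 1`,
whose convergents `p_n/q_n` converge to `ξ`.
Here `P (n+1)` is `p_n` and `Q (n+1)` is `q_n` (so `P 0 = p_{-1}`, `Q 0 = q_{-1}`). -/
theorem padic_cf_expansion_exists (p : ℕ) [Fact p.Prime] (ξ : ℚ_[p])
    (hirr : ∀ r : ℚ, (r : ℚ_[p]) ≠ ξ) :
    ∃ a : ℕ → ℚ,
      (∀ n, ∃ m : ℕ, ∃ z : ℤ, (p : ℚ) ^ m * a n = z) ∧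
      (0 ≤ a 0 ∧ a 0 < p) ∧
      (∀ n, 1 ≤ n → 0 < a n ∧ a n < p ∧ (p : ℝ) ≤ ‖((a n : ℚ) : ℚ_[p])‖) ∧
      ∀ P Q : ℕ → ℚ_[p],
        P 0 = 1 → P 1 = ((a 0 : ℚ) : ℚ_[p]) → Q 0 = 0 → Q 1 = 1 →
        (∀ n, P (n + 2) = ((a (n + 1) : ℚ) : ℚ_[p]) * P (n + 1) + P n) →
        (∀ n, Q (n + 2) = ((a (n + 1) : ℚ) : ℚ_[p]) * Q (n + 1) + Q n) →
        Filter.Tendsto (fun n => P (n + 1) / Q (n + 1)) Filter.atTop (nhds ξ) :=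
  padic_cf_expansion_exists' p ξ hirr
end

section
/- Let (a_n)_{n≥0} be a sequence in ℚ_p with ‖a_n‖_p ≥ p for all n ≥ 1, and let (q_n) be the convergent denominators of the continued fraction with partial quotients (a_n). Then ‖q_n‖_p ≥ p^n for all n ≥ 0; in particular ‖q_n‖_p → ∞ and 1/(‖q_n‖_p ‖q_{n+1}‖_p) → 0 as n → ∞. -/
/-- If `‖a_n‖_p ≥ p` for all `n ≥ 1`, then the convergent denominators satisfy
`‖q_n‖_p ≥ p^n`, hence `‖q_n‖_p → ∞` and `1/(‖q_n‖_p ‖q_{n+1}‖_p) → 0`.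
Here `Q (n+1)` is `q_n` (so `Q 0 = q_{-1} = 0`, `Q 1 = q_0 = 1`). -/
theorem padic_cf_denominator_growth (p : ℕ) [Fact p.Prime]
    (a : ℕ → ℚ_[p]) (hnorm : ∀ n, 1 ≤ n → (p : ℝ) ≤ ‖a n‖)
    (Q : ℕ → ℚ_[p])
    (hQ0 : Q 0 = 0) (hQ1 : Q 1 = 1)
    (hQrec : ∀ n, Q (n + 2) = a (n + 1) * Q (n + 1) + Q n) :
    (∀ n, (p : ℝ) ^ n ≤ ‖Q (n + 1)‖) ∧
    Filter.Tendsto (fun n => ‖Q (n + 1)‖) Filter.atTop Filter.atTop ∧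
    Filter.Tendsto (fun n => 1 / (‖Q (n + 1)‖ * ‖Q (n + 2)‖)) Filter.atTop (nhds 0) := by
  have hp1 : (1 : ℝ) < p := by exact_mod_cast (Fact.out : p.Prime).one_lt
  have key : ∀ n, (p : ℝ) ^ n ≤ ‖Q (n + 1)‖ ∧ ‖Q n‖ < ‖Q (n + 1)‖ := by
    intro n
    induction n with
    | zero => simp [hQ0, hQ1]
    | succ n ih =>
      obtain ⟨h1, h2⟩ := ih
      have hpn : (0 : ℝ) < (p : ℝ) ^ n := pow_pos (by linarith) n
      have hQpos : (0 : ℝ) < ‖Q (n + 1)‖ := lt_of_lt_of_le hpn h1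
      have ha : (p : ℝ) ≤ ‖a (n + 1)‖ := hnorm (n + 1) (by omega)
      have hlt : ‖Q n‖ < ‖a (n + 1) * Q (n + 1)‖ := by
        rw [norm_mul]
        calc ‖Q n‖ < ‖Q (n + 1)‖ := h2
          _ = 1 * ‖Q (n + 1)‖ := by ring
          _ < ‖a (n + 1)‖ * ‖Q (n + 1)‖ := by
              apply mul_lt_mul_of_pos_right (lt_of_lt_of_le hp1 ha) hQpos
      have heq : ‖Q (n + 2)‖ = ‖a (n + 1) * Q (n + 1)‖ := by
        rw [hQrec n, Padic.add_eq_max_of_ne (ne_of_gt hlt),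
          max_eq_left (le_of_lt hlt)]
      constructor
      · rw [heq, norm_mul, pow_succ, mul_comm]
        exact mul_le_mul ha h1 (le_of_lt hpn) (norm_nonneg _)
      · rw [heq, norm_mul]
        nlinarith
  refine ⟨fun n => (key n).1, ?_, ?_⟩
  · have := Filter.tendsto_atTop_mono (fun n => (key n).1)
      (tendsto_pow_atTop_atTop_of_one_lt hp1)
    exact this
  · have h1 : Filter.Tendsto (fun n => ‖Q (n + 1)‖) Filter.atTop Filter.atTop :=
      Filter.tendsto_atTop_mono (fun n => (key n).1)
        (tendsto_pow_atTop_atTop_of_one_lt hp1)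
    have h2 : Filter.Tendsto (fun n => ‖Q (n + 2)‖) Filter.atTop Filter.atTop :=
      Filter.tendsto_atTop_mono (fun n => (key (n + 1)).1)
        ((tendsto_pow_atTop_atTop_of_one_lt hp1).comp (Filter.tendsto_add_atTop_nat 1))
    have h3 := h1.atTop_mul_atTop₀ h2
    have := h3.inv_tendsto_atTop
    simpa [one_div, Pi.inv_def] using this
end
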